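/- Let R be a nontrivial commutative ring and A a rank-two diagonalisable commutative Frobenius algebra over R with diagonal basis {a,b}. Write Δ(a) = α·(a⊗a) + β·(a⊗b) + γ·(b⊗a) + δ·(b⊗b) in the basis {a⊗a, a⊗b, b⊗a, b⊗b} of A ⊗_R A. Then β = 0, γ = 0, and δ = 0. -/

import Mathlib

open TensorProduct

/-- For a rank-two diagonalisable commutative Frobenius algebra `A` over a
nontrivial commutative ring `R` with diagonal basis `{a, b}`, writing
`Δ a = α•(a⊗a) + β•(a⊗b) + γ•(b⊗a) + δ•(b⊗b)` in the basis
`{a⊗a, a⊗b, b⊗a, b⊗b}` of `A ⊗[R] A`, we have `β = 0`, `γ = 0` and `δ = 0`. -/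
theorem diagonalisable_frobenius_comul_coeffs_vanish
(R A : Type*) [CommRing R] [Nontrivial R] [CommRing A] [Algebra R A]
    (B : Module.Basis (Fin 2) R A) (a b : A) (hB0 : B 0 = a) (hB1 : B 1 = b)
    (ha : a * a = a) (hb : b * b = b) (hab : a * b = 0)
    (ε : A →ₗ[R] R) (Δ : A →ₗ[R] A ⊗[R] A)
    (hnd : Function.Bijective fun x : A => ε ∘ₗ LinearMap.mul R A x)
    (hfrob : ∀ x y : A,
      TensorProduct.rid R A
        (TensorProduct.map LinearMap.id (ε ∘ₗ LinearMap.mulRight R y) (Δ x)) = x * y)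
    (α β γ δ : R)
    (hΔa : Δ a = α • (a ⊗ₜ[R] a) + β • (a ⊗ₜ[R] b) + γ • (b ⊗ₜ[R] a) + δ • (b ⊗ₜ[R] b)) :
    β = 0 ∧ γ = 0 ∧ δ = 0 := by
  have coord : ∀ c0 c1 : R, c0 • a + c1 • b = 0 → c0 = 0 ∧ c1 = 0 := by
    intro c0 c1 h
    have h' : B.equivFun (c0 • B 0 + c1 • B 1) = B.equivFun 0 := by
      rw [hB0, hB1, h, map_zero]
    have h0 := congrFun h' 0
    have h1 := congrFun h' 1
    simp [Module.Basis.equivFun_self] at h0 h1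
    exact ⟨h0, h1⟩
  have key : ∀ y : A, (α * ε (a*y) + β * ε (b*y)) • a + (γ * ε (a*y) + δ * ε (b*y)) • b = a * y := by
    intro y
    have h := hfrob a y
    rw [hΔa] at h
    simp only [map_add, map_smul, TensorProduct.map_tmul, LinearMap.id_coe, id_eq,
      LinearMap.comp_apply, LinearMap.mulRight_apply, TensorProduct.rid_tmul] at h
    conv_rhs => rw [← h]
    module
  have keyb := key b
  rw [hab, hb] at keyb
  simp only [map_zero, mul_zero, zero_add] at keyb
  have hβδ := coord _ _ keyb
  have keya := key a
  rw [ha, mul_comm b a, hab] at keya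
  simp only [map_zero, mul_zero, add_zero] at keya
  have keya' : (α * ε a - 1) • a + (γ * ε a) • b = 0 := by
    rw [show ((α * ε a - 1) • a + (γ * ε a) • b : A)
        = ((α * ε a) • a + (γ * ε a) • b) - a by module, keya, sub_self]
  have hγ := (coord _ _ keya').2
  obtain ⟨x, hx⟩ := hnd.2 (B.coord 0)
  obtain ⟨z, hz⟩ := hnd.2 (B.coord 1)
  have hxa : ε (x * a) = 1 := by
    have := congrArg (fun f => f a) hx
    simp only [LinearMap.comp_apply, LinearMap.mul_apply'] at this
    rw [this, ← hB0, Module.Basis.coord_apply, Module.Basis.repr_self]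
    simp
  have hzb : ε (z * b) = 1 := by
    have := congrArg (fun f => f b) hz
    simp only [LinearMap.comp_apply, LinearMap.mul_apply'] at this
    rw [this, ← hB1, Module.Basis.coord_apply, Module.Basis.repr_self]
    simp
  obtain ⟨r0, r1, hx2⟩ : ∃ r0 r1 : R, x = r0 • a + r1 • b :=
    ⟨B.repr x 0, B.repr x 1, by
      conv_lhs => rw [← B.sum_repr x]
      rw [Fin.sum_univ_two, hB0, hB1]⟩
  obtain ⟨s0, s1, hz2⟩ : ∃ s0 s1 : R, z = s0 • a + s1 • b :=
    ⟨B.repr z 0, B.repr z 1, by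
      conv_lhs => rw [← B.sum_repr z]
      rw [Fin.sum_univ_two, hB0, hB1]⟩
  have hua : r0 * ε a = 1 := by
    rw [← hxa, hx2, add_mul, smul_mul_assoc, smul_mul_assoc, ha, mul_comm b a, hab,
      smul_zero, add_zero, map_smul, smul_eq_mul]
  have hub : s1 * ε b = 1 := by
    rw [← hzb, hz2, add_mul, smul_mul_assoc, smul_mul_assoc, hb, hab,
      smul_zero, zero_add, map_smul, smul_eq_mul]
  refine ⟨?_, ?_, ?_⟩
  · calc β = β * (s1 * ε b) := by rw [hub, mul_one]
    _ = s1 * (β * ε b) := by ring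
    _ = 0 := by rw [hβδ.1, mul_zero]
  · calc γ = γ * (r0 * ε a) := by rw [hua, mul_one]
    _ = r0 * (γ * ε a) := by ring
    _ = 0 := by rw [hγ, mul_zero]
  · calc δ = δ * (s1 * ε b) := by rw [hub, mul_one]
    _ = s1 * (δ * ε b) := by ring
    _ = 0 := by rw [hβδ.2, mul_zero]
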